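/- arXiv:2402.12213 — 2 statements merged into one kernel-verified Lean document; each statement's English description precedes it below -/
import Mathlib

section
/- Let ζ ∈ ℝ³, α, β ≥ 0, and let ψ : ℝ³ \ {0} → ℝ be C¹ with |∇ψ(z)| ≤ C₀ |z|^{-α}(1 + s_ζ(z))^{-β} for all |z| ≥ ε, where ε > 0. Let R > 0 and f : ℝ³ → ℝ integrable, bounded, with support in the ball B_R, and set Λ := ∫ f(y) dy and M := ∫ |f(y)| dy. Then for every S > R + ε there exists C > 0 (depending on α, β, ε, R, S, ζ, C₀) such that for all |x| ≥ S, |(ψ * f)(x) - Λ ψ(x)| ≤ C |x|^{-α} (1 + s_ζ(x))^{-β} M. -/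
open MeasureTheory

noncomputable def sw (ζ x : EuclideanSpace ℝ (Fin 3)) : ℝ :=
  (‖ζ‖ * ‖x‖ + (inner ℝ ζ x : ℝ)) / 2

lemma sw_nonneg (ζ x : EuclideanSpace ℝ (Fin 3)) : 0 ≤ sw ζ x := by
  have h := abs_real_inner_le_norm ζ x
  have := neg_abs_le (inner ℝ ζ x : ℝ)
  unfold sw; nlinarith

lemma sw_comp (ζ x w : EuclideanSpace ℝ (Fin 3)) {R : ℝ} (hw : ‖w‖ ≤ R) :
    sw ζ x ≤ sw ζ (x - w) + ‖ζ‖ * R := by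
  have h1 : ‖x‖ - ‖x - w‖ ≤ ‖w‖ := by
    have := norm_sub_norm_le x (x - w); simpa using this
  have h2 : (inner ℝ ζ x : ℝ) - inner ℝ ζ (x - w) = inner ℝ ζ w := by
    rw [inner_sub_right]; ring
  have h3 : (inner ℝ ζ w : ℝ) ≤ ‖ζ‖ * ‖w‖ := real_inner_le_norm ζ w
  have h0 : 0 ≤ ‖ζ‖ := norm_nonneg ζ
  unfold sw
  nlinarith [norm_nonneg w]

set_option maxHeartbeats 1000000 in
/-- If `ψ` is `C¹` away from the origin with `|∇ψ(z)| ≤ C₀|z|^{-α}(1+s_ζ(z))^{-β}` for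
`|z| ≥ ε`, and `f` is integrable, bounded, with support in `B_R`, then for every
`S > R + ε` there is `C > 0` such that for `|x| ≥ S`,
`|(ψ*f)(x) - (∫f) ψ(x)| ≤ C |x|^{-α} (1+s_ζ(x))^{-β} ∫|f|`. -/
theorem stmt_9 (ζ : EuclideanSpace ℝ (Fin 3)) (α β : ℝ) (hα : 0 ≤ α) (hβ : 0 ≤ β)
    (ε : ℝ) (hε : 0 < ε)
    (ψ : EuclideanSpace ℝ (Fin 3) → ℝ) (hψ : ContDiffOn ℝ 1 ψ {0}ᶜ)
    (C₀ : ℝ) (hC₀ : 0 < C₀)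
    (hgrad : ∀ z : EuclideanSpace ℝ (Fin 3), ε ≤ ‖z‖ →
      ‖gradient ψ z‖ ≤ C₀ * ‖z‖ ^ (-α) * (1 + sw ζ z) ^ (-β))
    (R : ℝ) (hR : 0 < R) (f : EuclideanSpace ℝ (Fin 3) → ℝ) (hf : Integrable f)
    (hbdd : ∃ B : ℝ, ∀ y, |f y| ≤ B)
    (hsupp : Function.support f ⊆ Metric.ball 0 R)
    (S : ℝ) (hS : R + ε < S) :
    ∃ C > (0:ℝ), ∀ x : EuclideanSpace ℝ (Fin 3), S ≤ ‖x‖ →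
      |(∫ y, ψ (x - y) * f y) - (∫ y, f y) * ψ x|
        ≤ C * ‖x‖ ^ (-α) * (1 + sw ζ x) ^ (-β) * (∫ y, |f y|) := by
  have hS0 : 0 < S := by linarith
  set k : ℝ := (S - R) / S with hkdef
  have hk0 : 0 < k := div_pos (by linarith) hS0
  have hζR : 0 < 1 + ‖ζ‖ * R := by positivity
  set C : ℝ := R * C₀ * k ^ (-α) * (1 + ‖ζ‖ * R) ^ β with hCdef
  have hkα : 0 < k ^ (-α) := Real.rpow_pos_of_pos hk0 _
  have hζβ : 0 < (1 + ‖ζ‖ * R) ^ β := Real.rpow_pos_of_pos hζR _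
  have hCpos : 0 < C := by positivity
  refine ⟨C, hCpos, ?_⟩
  intro x hx
  have hx0 : 0 < ‖x‖ := lt_of_lt_of_le hS0 hx
  set w : ℝ := ‖x‖ ^ (-α) * (1 + sw ζ x) ^ (-β) with hwdef
  have hsx : (0:ℝ) < 1 + sw ζ x := by linarith [sw_nonneg ζ x]
  have hw0 : 0 < w := mul_pos (Real.rpow_pos_of_pos hx0 _) (Real.rpow_pos_of_pos hsx _)
  -- gradient bound at points close to x
  have hgradb : ∀ z, ‖x - z‖ ≤ R →
      ‖fderiv ℝ ψ z‖ ≤ C₀ * k ^ (-α) * (1 + ‖ζ‖ * R) ^ β * w := by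
    intro z hz
    have hz1 : ‖x‖ - R ≤ ‖z‖ := by
      have := norm_sub_norm_le x z; linarith
    have hεz : ε ≤ ‖z‖ := by linarith
    have hkx : k * ‖x‖ ≤ ‖z‖ := by
      have h2 : R * ‖x‖ ≥ R * S := by nlinarith
      have : k * ‖x‖ ≤ ‖x‖ - R := by
        rw [hkdef, div_mul_eq_mul_div, div_le_iff₀ hS0]
        nlinarith
      linarith
    have hkx0 : 0 < k * ‖x‖ := mul_pos hk0 hx0
    have b1 : ‖z‖ ^ (-α) ≤ (k * ‖x‖) ^ (-α) :=
      Real.rpow_le_rpow_of_nonpos hkx0 hkx (neg_nonpos.mpr hα)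
    have b1' : (k * ‖x‖) ^ (-α) = k ^ (-α) * ‖x‖ ^ (-α) :=
      Real.mul_rpow hk0.le (norm_nonneg x)
    have hswz : (1 + sw ζ x) / (1 + ‖ζ‖ * R) ≤ 1 + sw ζ z := by
      have hc := sw_comp ζ x (x - z) hz
      simp only [sub_sub_cancel] at hc
      rw [div_le_iff₀ hζR]
      nlinarith [sw_nonneg ζ z, mul_nonneg (sw_nonneg ζ z) (mul_nonneg (norm_nonneg ζ) hR.le)]
    have hq0 : 0 < (1 + sw ζ x) / (1 + ‖ζ‖ * R) := div_pos hsx hζR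
    have b2 : (1 + sw ζ z) ^ (-β) ≤ ((1 + sw ζ x) / (1 + ‖ζ‖ * R)) ^ (-β) :=
      Real.rpow_le_rpow_of_nonpos hq0 hswz (neg_nonpos.mpr hβ)
    have b2' : ((1 + sw ζ x) / (1 + ‖ζ‖ * R)) ^ (-β)
        = (1 + sw ζ x) ^ (-β) * (1 + ‖ζ‖ * R) ^ β := by
      rw [Real.div_rpow hsx.le hζR.le, Real.rpow_neg hζR.le β, div_eq_mul_inv, inv_inv]
    have hfg : ‖fderiv ℝ ψ z‖ = ‖gradient ψ z‖ := by
      rw [gradient, LinearIsometryEquiv.norm_map]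
    have h1 := hgrad z hεz
    rw [← hfg] at h1
    have hz2 : 0 < ‖z‖^(-α) := Real.rpow_pos_of_pos (lt_of_lt_of_le hkx0 hkx) _
    have hz3 : (0:ℝ) < 1 + sw ζ z := by linarith [sw_nonneg ζ z]
    have hz4 : 0 ≤ (1 + sw ζ z) ^ (-β) := (Real.rpow_pos_of_pos hz3 _).le
    calc ‖fderiv ℝ ψ z‖ ≤ C₀ * ‖z‖ ^ (-α) * (1 + sw ζ z) ^ (-β) := h1
      _ ≤ C₀ * (k ^ (-α) * ‖x‖ ^ (-α)) * ((1 + sw ζ x) ^ (-β) * (1 + ‖ζ‖ * R) ^ β) := by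
          rw [← b1', ← b2']
          apply mul_le_mul (by nlinarith) b2 hz4 (by positivity)
      _ = C₀ * k ^ (-α) * (1 + ‖ζ‖ * R) ^ β * w := by rw [hwdef]; ring
  -- mean value estimate
  have key : ∀ y : EuclideanSpace ℝ (Fin 3), ‖y‖ ≤ R → |ψ (x - y) - ψ x| ≤ C * w := by
    intro y hy
    have hseg : ∀ z ∈ segment ℝ x (x - y), ‖x - z‖ ≤ R := by
      intro z hz
      obtain ⟨a, b, ha, hb, hab, hz⟩ := hz
      have ha' : a = 1 - b := by linarith
      have hxz : x - z = b • y := by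
        rw [← hz, ha', sub_smul, one_smul, smul_sub]
        abel
      rw [hxz, norm_smul, Real.norm_eq_abs, abs_of_nonneg hb]
      have hb1 : b ≤ 1 := by linarith
      nlinarith [norm_nonneg y]
    have hdiff : ∀ z ∈ segment ℝ x (x - y), DifferentiableAt ℝ ψ z := by
      intro z hz
      have h1 := hseg z hz
      have hz1 : ‖x‖ - R ≤ ‖z‖ := by
        have := norm_sub_norm_le x z; linarith
      have hz0 : z ≠ 0 := by
        intro h; rw [h, norm_zero] at hz1; linarith
      exact ((hψ.contDiffAt (isOpen_compl_singleton.mem_nhds hz0)).differentiableAt one_ne_zero)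
    have hmvt := (convex_segment x (x - y)).norm_image_sub_le_of_norm_fderiv_le hdiff
      (fun z hz => hgradb z (hseg z hz)) (left_mem_segment ℝ x (x - y))
      (right_mem_segment ℝ x (x - y))
    have hyn : ‖(x - y) - x‖ = ‖y‖ := by
      rw [show (x - y) - x = -y by abel, norm_neg]
    rw [hyn] at hmvt
    calc |ψ (x - y) - ψ x| ≤ C₀ * k ^ (-α) * (1 + ‖ζ‖ * R) ^ β * w * ‖y‖ := hmvt
      _ ≤ C * w := by
          rw [hCdef]
          have hA : 0 < C₀ * k ^ (-α) * (1 + ‖ζ‖ * R) ^ β * w := by positivity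
          nlinarith [mul_nonneg (sub_nonneg.mpr hy) hA.le]
  -- integrability
  have hcont : ContinuousOn (fun y : EuclideanSpace ℝ (Fin 3) => ψ (x - y))
      (Metric.closedBall 0 R) := by
    apply hψ.continuousOn.comp (Continuous.continuousOn (by continuity))
    intro y hy
    rw [Metric.mem_closedBall, dist_zero_right] at hy
    have : ‖x‖ - ‖y‖ ≤ ‖x - y‖ := norm_sub_norm_le x y
    simp only [Set.mem_compl_iff, Set.mem_singleton_iff]
    intro h
    rw [h, norm_zero] at this; linarith
  have hmeas : AEStronglyMeasurable (fun y => ψ (x - y) * f y) volume := by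
    have h1 : AEStronglyMeasurable (fun y : EuclideanSpace ℝ (Fin 3) => ψ (x - y))
        (volume.restrict (Metric.closedBall 0 R)) :=
      hcont.aestronglyMeasurable measurableSet_closedBall
    have h2 := h1.mul (hf.aestronglyMeasurable.restrict)
    have h3 := (aestronglyMeasurable_indicator_iff measurableSet_closedBall).mpr h2
    have heq : (fun y => ψ (x - y) * f y)
        = Set.indicator (Metric.closedBall 0 R) (fun y => ψ (x - y) * f y) := by
      funext y
      by_cases hy : y ∈ Metric.closedBall 0 R
      · rw [Set.indicator_of_mem hy]
      · have hfy : f y = 0 := by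
          by_contra h
          exact hy (Metric.ball_subset_closedBall (hsupp h))
        rw [Set.indicator_of_notMem hy, hfy, mul_zero]
    rw [heq]; exact h3
  obtain ⟨K, hK⟩ := (isCompact_closedBall (0 : EuclideanSpace ℝ (Fin 3)) R).exists_bound_of_continuousOn hcont
  have hint1 : Integrable (fun y => ψ (x - y) * f y) := by
    apply Integrable.mono' (hf.abs.const_mul (max K 0)) hmeas
    filter_upwards with y
    by_cases hy : y ∈ Metric.closedBall 0 R
    · have h1 := hK y hy
      rw [norm_mul]
      have : ‖f y‖ = |f y| := rfl
      nlinarith [norm_nonneg (f y), le_max_left K 0, abs_nonneg (f y), norm_nonneg (ψ (x-y))]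
    · have hfy : f y = 0 := by
        by_contra h
        exact hy (Metric.ball_subset_closedBall (hsupp h))
      simp [hfy]
  have hint2 : Integrable (fun y => ψ x * f y) := hf.const_mul _
  have hinth : Integrable (fun y => (ψ (x - y) - ψ x) * f y) := by
    have heq : (fun y => (ψ (x - y) - ψ x) * f y)
        = fun y => ψ (x - y) * f y - ψ x * f y := by funext y; ring
    rw [heq]; exact hint1.sub hint2
  have heq : (∫ y, ψ (x - y) * f y) - (∫ y, f y) * ψ x
      = ∫ y, (ψ (x - y) - ψ x) * f y := by
    have h1 : ∫ y, (ψ (x - y) - ψ x) * f y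
        = (∫ y, ψ (x - y) * f y) - ∫ y, ψ x * f y := by
      rw [show (fun y => (ψ (x - y) - ψ x) * f y)
          = fun y => ψ (x - y) * f y - ψ x * f y from funext fun y => by ring]
      exact integral_sub hint1 hint2
    rw [h1, integral_const_mul]
    ring
  rw [heq]
  have ptw : ∀ y, |(ψ (x - y) - ψ x) * f y| ≤ C * w * |f y| := by
    intro y
    by_cases hfy : f y = 0
    · simp [hfy]
    · have hy : ‖y‖ ≤ R := by
        have := hsupp hfy
        rw [Metric.mem_ball, dist_zero_right] at this
        linarith
      rw [abs_mul]
      exact mul_le_mul_of_nonneg_right (key y hy) (abs_nonneg _)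
  calc |∫ y, (ψ (x - y) - ψ x) * f y| ≤ ∫ y, |(ψ (x - y) - ψ x) * f y| :=
        by simpa only [Real.norm_eq_abs] using
          norm_integral_le_integral_norm (μ := volume) (fun y => (ψ (x - y) - ψ x) * f y)
    _ ≤ ∫ y, C * w * |f y| :=
        integral_mono hinth.abs (hf.abs.const_mul _) ptw
    _ = C * w * ∫ y, |f y| := integral_const_mul _ _
    _ = C * ‖x‖ ^ (-α) * (1 + sw ζ x) ^ (-β) * (∫ y, |f y|) := by rw [hwdef]; ring
end

section
/- Let ζ ∈ ℝ³, α, β ≥ 0, and let ξ : ℝ³ \ {0} → ℝ be C² with |∇²ξ(z)| ≤ C₀ |z|^{-α}(1 + s_ζ(z))^{-β} for all |z| ≥ ε, where ε > 0. Let R > 0 and f : ℝ³ → ℝ integrable with support in B_R, set Λ := ∫ f(y) dy, Ξ := ∫ y f(y) dy ∈ ℝ³, and M := ∫ |f(y)| dy. Then for every S > R + ε there exists C > 0 such that for all |x| ≥ S, |(ξ * f)(x) - Λ ξ(x) + Ξ · ∇ξ(x)| ≤ C |x|^{-α} (1 + s_ζ(x))^{-β} M. -/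
open MeasureTheory

set_option maxHeartbeats 1000000

/-- If `ξ` is `C²` away from the origin with
`|∇²ξ(z)| ≤ C₀|z|^{-α}(1+s_ζ(z))^{-β}` for `|z| ≥ ε`, and `f` is integrable with
support in `B_R`, set `Λ = ∫ f`, `Ξ = ∫ y f(y) dy`, `M = ∫ |f|`. Then for every
`S > R + ε` there is `C > 0` such that for `|x| ≥ S`,
`|(ξ*f)(x) - Λξ(x) + Ξ·∇ξ(x)| ≤ C |x|^{-α} (1+s_ζ(x))^{-β} M`. -/
theorem stmt_10 (ζ : EuclideanSpace ℝ (Fin 3)) (α β : ℝ) (hα : 0 ≤ α) (hβ : 0 ≤ β)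
    (ε : ℝ) (hε : 0 < ε)
    (ξ : EuclideanSpace ℝ (Fin 3) → ℝ) (hξ : ContDiffOn ℝ 2 ξ {0}ᶜ)
    (C₀ : ℝ) (hC₀ : 0 < C₀)
    (hhess : ∀ z : EuclideanSpace ℝ (Fin 3), ε ≤ ‖z‖ →
      ‖fderiv ℝ (fderiv ℝ ξ) z‖ ≤ C₀ * ‖z‖ ^ (-α) * (1 + sw ζ z) ^ (-β))
    (R : ℝ) (hR : 0 < R) (f : EuclideanSpace ℝ (Fin 3) → ℝ) (hf : Integrable f)
    (hsupp : Function.support f ⊆ Metric.ball 0 R)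
    (S : ℝ) (hS : R + ε < S) :
    ∃ C > (0:ℝ), ∀ x : EuclideanSpace ℝ (Fin 3), S ≤ ‖x‖ →
      |(∫ y, ξ (x - y) * f y) - (∫ y, f y) * ξ x
          + (inner ℝ (∫ y, f y • y) (gradient ξ x) : ℝ)|
        ≤ C * ‖x‖ ^ (-α) * (1 + sw ζ x) ^ (-β) * (∫ y, |f y|) := by
  have hS0 : 0 < S := lt_trans (by positivity) hS
  set R' : ℝ := (R + (S - ε)) / 2 with hR'def
  have hRR' : R < R' := by simp only [hR'def]; linarith
  have hR'Sε : R' < S - ε := by simp only [hR'def]; linarith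
  have hR'0 : 0 < R' := lt_trans hR hRR'
  have hR'S : R' < S := by linarith
  set c : ℝ := 1 - R' / S with hcdef
  have hc0 : 0 < c := by
    have : R' / S < 1 := (div_lt_one hS0).2 hR'S
    simp only [hcdef]; linarith
  set K : ℝ := C₀ * c ^ (-α) * (1 + ‖ζ‖ * R') ^ β with hKdef
  have hζR' : (0:ℝ) < 1 + ‖ζ‖ * R' := by positivity
  have hK0 : 0 < K := by
    have h1 : (0:ℝ) < c ^ (-α) := Real.rpow_pos_of_pos hc0 _
    have h2 : (0:ℝ) < (1 + ‖ζ‖ * R') ^ β := Real.rpow_pos_of_pos hζR' _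
    positivity
  have hsw_nonneg : ∀ z : EuclideanSpace ℝ (Fin 3), 0 ≤ sw ζ z := by
    intro z
    have h := real_inner_le_norm ζ (-z)
    rw [inner_neg_right, norm_neg] at h
    simp only [sw]
    linarith
  refine ⟨K * (R' * R'), by positivity, ?_⟩
  intro x hx
  set A : ℝ := ‖x‖ ^ (-α) * (1 + sw ζ x) ^ (-β) with hAdef
  have hx0 : (0:ℝ) < ‖x‖ := lt_of_lt_of_le hS0 hx
  have hA0 : 0 < A := by
    have h1 : (0:ℝ) < ‖x‖ ^ (-α) := Real.rpow_pos_of_pos hx0 _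
    have h2 : (0:ℝ) < (1 + sw ζ x) ^ (-β) :=
      Real.rpow_pos_of_pos (by linarith [hsw_nonneg x]) _
    positivity
  set U : Set (EuclideanSpace ℝ (Fin 3)) := Metric.ball x R' with hUdef
  have hxU : x ∈ U := Metric.mem_ball_self hR'0
  have hUnorm : ∀ z ∈ U, S - R' ≤ ‖z‖ := by
    intro z hz
    have hd : ‖z - x‖ < R' := by
      have := Metric.mem_ball.1 hz
      rwa [dist_eq_norm] at this
    have := norm_sub_norm_le x z
    rw [show ‖x - z‖ = ‖z - x‖ by rw [← norm_neg]; congr 1; abel] at this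
    linarith
  have hUε : ∀ z ∈ U, ε ≤ ‖z‖ := fun z hz => le_trans (by linarith) (hUnorm z hz)
  have hU0 : ∀ z ∈ U, z ∈ ({0}ᶜ : Set (EuclideanSpace ℝ (Fin 3))) := by
    intro z hz
    simp only [Set.mem_compl_iff, Set.mem_singleton_iff]
    intro h
    have := hUε z hz
    rw [h, norm_zero] at this
    linarith
  -- hessian bound on U in terms of x
  have hessbound : ∀ z ∈ U, ‖fderiv ℝ (fderiv ℝ ξ) z‖ ≤ K * A := by
    intro z hz
    refine (hhess z (hUε z hz)).trans ?_
    have hzx : c * ‖x‖ ≤ ‖z‖ := by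
      have hd : ‖x - z‖ < R' := by
        have := Metric.mem_ball.1 hz
        rw [dist_eq_norm] at this
        rw [norm_sub_rev]
        exact this
      have h1 : ‖x‖ - ‖z‖ ≤ ‖x - z‖ := norm_sub_norm_le x z
      have h2 : R' / S * ‖x‖ ≥ R' / S * S :=
        mul_le_mul_of_nonneg_left hx (by positivity)
      rw [div_mul_cancel₀ _ (ne_of_gt hS0)] at h2
      have h4 : c * ‖x‖ ≤ ‖x‖ - R' := by
        rw [hcdef, sub_mul, one_mul]
        have h5 : R' ≤ R' / S * ‖x‖ := by
          rw [div_mul_eq_mul_div, le_div_iff₀ hS0]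
          nlinarith
        linarith
      linarith
    have hz0 : (0:ℝ) < c * ‖x‖ := by positivity
    have hrn : ‖z‖ ^ (-α) ≤ c ^ (-α) * ‖x‖ ^ (-α) := by
      have := Real.rpow_le_rpow_of_nonpos hz0 hzx (neg_nonpos.2 hα)
      rwa [Real.mul_rpow hc0.le hx0.le] at this
    have hswz : sw ζ x ≤ sw ζ z + ‖ζ‖ * R' := by
      have hd : ‖x - z‖ ≤ R' := by
        have := Metric.mem_ball.1 hz
        rw [dist_eq_norm] at this
        rw [show ‖x - z‖ = ‖z - x‖ by rw [← norm_neg]; congr 1; abel]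
        linarith
      have h1 : ‖x‖ - ‖z‖ ≤ ‖x - z‖ := norm_sub_norm_le x z
      have h2 : (inner ℝ ζ x : ℝ) - inner ℝ ζ z ≤ ‖ζ‖ * ‖x - z‖ := by
        have := real_inner_le_norm ζ (x - z)
        rwa [inner_sub_right] at this
      have h3 : ‖ζ‖ * (‖x‖ - ‖z‖) ≤ ‖ζ‖ * ‖x - z‖ :=
        mul_le_mul_of_nonneg_left h1 (norm_nonneg ζ)
      have h4 : ‖ζ‖ * ‖x - z‖ ≤ ‖ζ‖ * R' := mul_le_mul_of_nonneg_left hd (norm_nonneg ζ)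
      simp only [sw]
      nlinarith
    have hswx : 1 + sw ζ x ≤ (1 + ‖ζ‖ * R') * (1 + sw ζ z) := by
      have h1 := hsw_nonneg z
      have h2 : (0:ℝ) ≤ ‖ζ‖ * R' := by positivity
      nlinarith
    have hswp : (1 + sw ζ z) ^ (-β) ≤ (1 + ‖ζ‖ * R') ^ β * (1 + sw ζ x) ^ (-β) := by
      have hz1 : (0:ℝ) < 1 + sw ζ z := by linarith [hsw_nonneg z]
      have hx1 : (0:ℝ) < 1 + sw ζ x := by linarith [hsw_nonneg x]
      have h := Real.rpow_le_rpow_of_nonpos hx1 hswx (neg_nonpos.2 hβ)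
      rw [Real.mul_rpow hζR'.le hz1.le] at h
      calc (1 + sw ζ z) ^ (-β)
          = (1 + ‖ζ‖ * R') ^ β * ((1 + ‖ζ‖ * R') ^ (-β) * (1 + sw ζ z) ^ (-β)) := by
            rw [← mul_assoc, ← Real.rpow_add hζR', add_neg_cancel, Real.rpow_zero, one_mul]
        _ ≤ (1 + ‖ζ‖ * R') ^ β * (1 + sw ζ x) ^ (-β) := by
            apply mul_le_mul_of_nonneg_left h (Real.rpow_nonneg hζR'.le _)
    calc C₀ * ‖z‖ ^ (-α) * (1 + sw ζ z) ^ (-β)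
        ≤ C₀ * (c ^ (-α) * ‖x‖ ^ (-α)) * ((1 + ‖ζ‖ * R') ^ β * (1 + sw ζ x) ^ (-β)) := by
          apply mul_le_mul
          · exact mul_le_mul_of_nonneg_left hrn hC₀.le
          · exact hswp
          · exact Real.rpow_nonneg (by linarith [hsw_nonneg z]) _
          · positivity
      _ = K * A := by simp only [hKdef, hAdef]; ring
  -- differentiability facts
  have hdiffξ : DifferentiableOn ℝ ξ {0}ᶜ := hξ.differentiableOn two_ne_zero
  have hCD1 : ContDiffOn ℝ 1 (fderiv ℝ ξ) {0}ᶜ :=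
    hξ.fderiv_of_isOpen isOpen_compl_singleton (by norm_num)
  have hdiff1 : ∀ z ∈ U, DifferentiableAt ℝ (fderiv ℝ ξ) z := by
    intro z hz
    exact (hCD1.differentiableOn one_ne_zero).differentiableAt
      (isOpen_compl_singleton.mem_nhds (hU0 z hz))
  have hdiffAt : ∀ z ∈ U, DifferentiableAt ℝ ξ z := by
    intro z hz
    exact hdiffξ.differentiableAt (isOpen_compl_singleton.mem_nhds (hU0 z hz))
  -- step 1 : gradient variation bound
  have step1 : ∀ z ∈ U, ‖fderiv ℝ ξ z - fderiv ℝ ξ x‖ ≤ K * A * R' := by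
    intro z hz
    have h := (convex_ball x R').norm_image_sub_le_of_norm_fderiv_le hdiff1 hessbound hxU hz
    refine h.trans ?_
    have : ‖z - x‖ ≤ R' := by
      have := Metric.mem_ball.1 hz
      rw [dist_eq_norm] at this
      linarith
    exact mul_le_mul_of_nonneg_left this (by positivity)
  -- step 2 : pointwise Taylor bound
  have pointwise : ∀ y : EuclideanSpace ℝ (Fin 3), ‖y‖ < R →
      |ξ (x - y) - ξ x + fderiv ℝ ξ x y| ≤ K * (R' * R') * A := by
    intro y hy
    set g : EuclideanSpace ℝ (Fin 3) → ℝ := fun z => ξ z - fderiv ℝ ξ x z with hgdef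
    have hdiffg : ∀ z ∈ U, DifferentiableAt ℝ g z := by
      intro z hz
      exact (hdiffAt z hz).sub (fderiv ℝ ξ x).differentiableAt
    have hfderivg : ∀ z ∈ U, ‖fderiv ℝ g z‖ ≤ K * A * R' := by
      intro z hz
      have : fderiv ℝ g z = fderiv ℝ ξ z - fderiv ℝ ξ x := by
        rw [hgdef]
        rw [fderiv_fun_sub (hdiffAt z hz) (fderiv ℝ ξ x).differentiableAt,
          (fderiv ℝ ξ x).fderiv]
      rw [this]
      exact step1 z hz
    have hxyU : x - y ∈ U := by
      rw [Metric.mem_ball, dist_eq_norm]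
      rw [show x - y - x = -y by abel, norm_neg]
      linarith
    have h := (convex_ball x R').norm_image_sub_le_of_norm_fderiv_le hdiffg hfderivg hxU hxyU
    have heq : g (x - y) - g x = ξ (x - y) - ξ x + fderiv ℝ ξ x y := by
      simp only [hgdef]
      have : fderiv ℝ ξ x (x - y) = fderiv ℝ ξ x x - fderiv ℝ ξ x y := map_sub _ _ _
      rw [this]; ring
    rw [heq] at h
    rw [show x - y - x = -y by abel, norm_neg] at h
    rw [← Real.norm_eq_abs]
    refine h.trans ?_
    have : K * A * R' * ‖y‖ ≤ K * A * R' * R' :=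
      mul_le_mul_of_nonneg_left (hy.le.trans hRR'.le) (by positivity)
    linarith [this]
  -- measurability of y ↦ ξ (x - y)
  have meas_xi : AEStronglyMeasurable (fun y => ξ (x - y))
      (volume : Measure (EuclideanSpace ℝ (Fin 3))) := by
    have hcont : ContinuousOn (fun y => ξ (x - y)) ({x}ᶜ) := by
      apply hξ.continuousOn.comp ((continuous_const.sub continuous_id).continuousOn)
      intro y hy
      simp only [Set.mem_compl_iff, Set.mem_singleton_iff] at hy ⊢
      intro h
      exact hy (by rwa [Pi.sub_apply, sub_eq_zero, eq_comm] at h)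
    have h1 : AEStronglyMeasurable (fun y => ξ (x - y))
        ((volume : Measure (EuclideanSpace ℝ (Fin 3))).restrict ({x}ᶜ)) :=
      hcont.aestronglyMeasurable (measurableSet_singleton x).compl
    have h2 : (volume : Measure (EuclideanSpace ℝ (Fin 3))).restrict ({x}ᶜ) = volume := by
      have hx0' : (volume : Measure (EuclideanSpace ℝ (Fin 3))) {x} = 0 := measure_singleton x
      rw [Measure.restrict_congr_set (t := Set.univ)
        (by rw [Filter.eventuallyEq_univ, mem_ae_iff]; simpa using hx0'), Measure.restrict_univ]
    rwa [h2] at h1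
  -- integrability
  set g₀ : EuclideanSpace ℝ (Fin 3) → ℝ :=
    fun y => (ξ (x - y) - ξ x + fderiv ℝ ξ x y) * f y with hg₀def
  have hptbound : ∀ y, ‖g₀ y‖ ≤ K * (R' * R') * A * ‖f y‖ := by
    intro y
    by_cases hy : f y = 0
    · simp only [hg₀def, hy, mul_zero, norm_zero, le_refl]
    · have hyR : ‖y‖ < R := by
        have := hsupp (Function.mem_support.2 hy)
        rwa [Metric.mem_ball, dist_zero_right] at this
      simp only [hg₀def, Real.norm_eq_abs, abs_mul]
      exact mul_le_mul_of_nonneg_right (pointwise y hyR) (abs_nonneg _)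
  have int_g₀ : Integrable g₀ := by
    apply Integrable.mono' ((hf.norm).const_mul (K * (R' * R') * A))
    · exact ((meas_xi.sub aestronglyMeasurable_const).add
        (fderiv ℝ ξ x).continuous.aestronglyMeasurable).mul hf.aestronglyMeasurable
    · filter_upwards with y
      exact hptbound y
  have int_hy : Integrable (fun y => f y • y)
      (volume : Measure (EuclideanSpace ℝ (Fin 3))) := by
    apply Integrable.mono' ((hf.norm).const_mul R)
    · exact hf.aestronglyMeasurable.smul aestronglyMeasurable_id
    · filter_upwards with y
      by_cases hy : f y = 0
      · simp only [hy, zero_smul, norm_zero, mul_zero, le_refl]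
      · have hyR : ‖y‖ < R := by
          have := hsupp (Function.mem_support.2 hy)
          rwa [Metric.mem_ball, dist_zero_right] at this
        rw [norm_smul, Real.norm_eq_abs]
        calc |f y| * ‖y‖ ≤ |f y| * R := mul_le_mul_of_nonneg_left hyR.le (abs_nonneg _)
          _ = R * ‖f y‖ := by rw [Real.norm_eq_abs]; ring
  have int_h₂ : Integrable (fun y => ξ x * f y) := hf.const_mul _
  have int_h₃ : Integrable (fun y => fderiv ℝ ξ x (f y • y)) :=
    (fderiv ℝ ξ x).integrable_comp int_hy
  -- key rewriting
  have key : (fun y => ξ (x - y) * f y)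
      = fun y => g₀ y + ξ x * f y - fderiv ℝ ξ x (f y • y) := by
    funext y
    simp only [hg₀def, ContinuousLinearMap.map_smul, smul_eq_mul]
    ring
  have hinteq : (∫ y, ξ (x - y) * f y)
      = (∫ y, g₀ y) + (∫ y, ξ x * f y) - ∫ y, fderiv ℝ ξ x (f y • y) := by
    have int_s : Integrable (fun y => g₀ y + ξ x * f y) := by exact int_g₀.add int_h₂
    rw [key, integral_sub int_s int_h₃, integral_add int_g₀ int_h₂]
  have h₂eq : (∫ y, ξ x * f y) = (∫ y, f y) * ξ x := by
    rw [integral_const_mul]; ring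
  have h₃eq : (∫ y, fderiv ℝ ξ x (f y • y)) = fderiv ℝ ξ x (∫ y, f y • y) :=
    (fderiv ℝ ξ x).integral_comp_comm int_hy
  have hgrad : (inner ℝ (∫ y, f y • y) (gradient ξ x) : ℝ) = fderiv ℝ ξ x (∫ y, f y • y) := by
    rw [real_inner_comm]
    exact InnerProductSpace.toDual_symm_apply
  have hLHS : (∫ y, ξ (x - y) * f y) - (∫ y, f y) * ξ x
      + (inner ℝ (∫ y, f y • y) (gradient ξ x) : ℝ) = ∫ y, g₀ y := by
    rw [hinteq, h₂eq, hgrad, h₃eq]; ring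
  rw [hLHS]
  -- final bound
  have hbound : |∫ y, g₀ y| ≤ (K * (R' * R') * A) * ∫ y, |f y| := by
    rw [← Real.norm_eq_abs]
    have h := norm_integral_le_of_norm_le (f := g₀)
      ((hf.norm).const_mul (K * (R' * R') * A))
      (Filter.Eventually.of_forall hptbound)
    refine h.trans ?_
    rw [integral_const_mul]
    simp only [Real.norm_eq_abs, le_refl]
  refine hbound.trans (le_of_eq ?_)
  rw [hAdef]
  ring
end
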